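/- arXiv:2102.12655 — 5 statements merged into one kernel-verified Lean document; each statement's English description precedes it below -/
import Mathlib

section
/- Let U and T be unitary operators on a finite-dimensional complex Hilbert space with ‖T − U‖ ≤ 1/√2 (operator norm), and let ψ be a unit vector. Define f = 1 − |⟨ψ, U†Tψ⟩|² and θ = Arg(⟨ψ, U†Tψ⟩), and let ℰ = ‖(T − U)ψ‖. Then f + θ²/4 ≤ ℰ² ≤ 2f + θ². -/
open scoped InnerProductSpace

private lemma trotter_aux (p r c θ : ℝ) (hp : 0 < p) (hp12 : p < 12)
    (hr1 : r ≤ 1) (hr0 : 3 / 4 ≤ r)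
    (h1 : 2 / p * θ ^ 2 ≤ 1 - c) (h2 : 1 - θ ^ 2 / 2 ≤ c) :
    1 - r ^ 2 + θ ^ 2 / 4 ≤ 2 - 2 * (r * c) ∧
      2 - 2 * (r * c) ≤ 2 * (1 - r ^ 2) + θ ^ 2 := by
  have hc1 : c ≤ 1 := by
    nlinarith [mul_nonneg (div_nonneg (by norm_num : (0:ℝ) ≤ 2) hp.le) (sq_nonneg θ)]
  constructor
  · have key : θ ^ 2 / 4 ≤ 2 * r * (1 - c) := by
      have h3 : 2 * r * (2 / p * θ ^ 2) ≤ 2 * r * (1 - c) :=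
        mul_le_mul_of_nonneg_left h1 (by linarith)
      have h4 : θ ^ 2 / 4 ≤ 2 * r * (2 / p * θ ^ 2) := by
        have heq : 2 * r * (2 / p * θ ^ 2) = (4 * r / p) * θ ^ 2 := by ring
        rw [heq]
        have hge : (1:ℝ) / 4 ≤ 4 * r / p := by
          rw [div_le_div_iff₀ (by norm_num) hp]
          nlinarith
        have := mul_le_mul_of_nonneg_right hge (sq_nonneg θ)
        linarith
      linarith
    nlinarith [sq_nonneg (1 - r)]
  · have hrc : 2 * r ^ 2 - 2 * r ≤ 0 := by nlinarith
    have h5 : 2 * r - 2 * (r * c) ≤ 2 - 2 * c := by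
      nlinarith [mul_nonneg (by linarith : (0:ℝ) ≤ 1 - r) (by linarith : (0:ℝ) ≤ 1 - c)]
    linarith

/-- For unitaries `U, T` with `‖T - U‖ ≤ 1/√2` and a unit vector `ψ`, setting
`f = 1 - |⟨ψ, U†Tψ⟩|²`, `θ = Arg ⟨ψ, U†Tψ⟩` and `ℰ = ‖(T - U) ψ‖`, we have
`f + θ²/4 ≤ ℰ² ≤ 2f + θ²`. -/
theorem trotter_fidelity_phase_bounds (n : ℕ)
    (U T : EuclideanSpace ℂ (Fin n) →L[ℂ] EuclideanSpace ℂ (Fin n))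
    (hU : U ∈ unitary (EuclideanSpace ℂ (Fin n) →L[ℂ] EuclideanSpace ℂ (Fin n)))
    (hT : T ∈ unitary (EuclideanSpace ℂ (Fin n) →L[ℂ] EuclideanSpace ℂ (Fin n)))
    (hTU : ‖T - U‖ ≤ 1 / Real.sqrt 2)
    (ψ : EuclideanSpace ℂ (Fin n)) (hψ : ‖ψ‖ = 1)
    (f θ ℰ : ℝ)
    (hf : f = 1 - ‖⟪ψ, (ContinuousLinearMap.adjoint U) (T ψ)⟫_ℂ‖ ^ 2)
    (hθ : θ = Complex.arg ⟪ψ, (ContinuousLinearMap.adjoint U) (T ψ)⟫_ℂ)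
    (hE : ℰ = ‖(T - U) ψ‖) :
    f + θ ^ 2 / 4 ≤ ℰ ^ 2 ∧ ℰ ^ 2 ≤ 2 * f + θ ^ 2 := by
  set z : ℂ := ⟪ψ, (ContinuousLinearMap.adjoint U) (T ψ)⟫_ℂ with hzdef
  have hz : z = ⟪U ψ, T ψ⟫_ℂ := ContinuousLinearMap.adjoint_inner_right U ψ (T ψ)
  have hUψ : ‖U ψ‖ = 1 := by
    rw [ContinuousLinearMap.norm_map_of_mem_unitary hU, hψ]
  have hTψ : ‖T ψ‖ = 1 := by
    rw [ContinuousLinearMap.norm_map_of_mem_unitary hT, hψ]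
  -- ℰ² = 2 − 2 Re z
  have hE2 : ℰ ^ 2 = 2 - 2 * z.re := by
    rw [hE, ContinuousLinearMap.sub_apply]
    have := @norm_sub_sq ℂ _ _ _ _ (T ψ) (U ψ)
    rw [this, hTψ, hUψ]
    have : (⟪T ψ, U ψ⟫_ℂ) = starRingEnd ℂ z := by
      rw [hz, ← inner_conj_symm]
    rw [this]
    simp [Complex.conj_re]
    ring
  -- ℰ² ≤ 1/2
  have hEle : ℰ ^ 2 ≤ 1 / 2 := by
    have h1 : ℰ ≤ ‖T - U‖ * ‖ψ‖ := hE ▸ (T - U).le_opNorm ψ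
    have h2 : ℰ ≤ 1 / Real.sqrt 2 := by
      rw [hψ, mul_one] at h1; exact h1.trans hTU
    have hEnn : 0 ≤ ℰ := hE ▸ norm_nonneg _
    have := mul_self_le_mul_self hEnn h2
    have hs : (1 / Real.sqrt 2) * (1 / Real.sqrt 2) = 1 / 2 := by
      rw [div_mul_div_comm, one_mul, Real.mul_self_sqrt (by norm_num)]
    nlinarith
  have hre : (3:ℝ)/4 ≤ z.re := by nlinarith
  have hzne : z ≠ 0 := by
    intro h; rw [h] at hre; simp at hre; linarith
  set r : ℝ := ‖z‖ with hrdef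
  have hr_norm : ‖z‖ = r := rfl
  have hr1 : r ≤ 1 := by
    have := norm_inner_le_norm (𝕜 := ℂ) (U ψ) (T ψ)
    rw [← hz, hUψ, hTψ, mul_one] at this
    exact hr_norm ▸ this
  have hr0 : (3:ℝ)/4 ≤ r := le_trans hre (Complex.re_le_norm z)
  have hcos : Real.cos θ = z.re / r := by rw [hθ]; exact Complex.cos_arg hzne
  have hrcos : z.re = r * Real.cos θ := by
    rw [hcos]; field_simp
  have hf' : f = 1 - r ^ 2 := by rw [hf]
  -- |θ| ≤ π/2
  have hθabs : |θ| ≤ Real.pi / 2 := by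
    rw [hθ]; exact Complex.abs_arg_le_pi_div_two_iff.2 (by linarith)
  have hθpi : |θ| ≤ Real.pi := hθabs.trans (by linarith [Real.pi_pos])
  -- cosine bounds
  have hcos_up : Real.cos θ ≤ 1 - 2 / Real.pi ^ 2 * θ ^ 2 :=
    Real.cos_le_one_sub_mul_cos_sq hθpi
  have hcos_lo : 1 - θ ^ 2 / 2 ≤ Real.cos θ := Real.one_sub_sq_div_two_le_cos
  have hπ : Real.pi < 3.15 := Real.pi_lt_d2
  have hπ0 : 0 < Real.pi := Real.pi_pos
  have hπsq : Real.pi ^ 2 < 12 := by nlinarith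
  have hE2' : ℰ ^ 2 = 2 - 2 * (r * Real.cos θ) := by rw [hE2, hrcos]
  have main := trotter_aux (Real.pi ^ 2) r (Real.cos θ) θ (by positivity) hπsq hr1 hr0
    (by linarith) hcos_lo
  rw [hE2', hf']
  exact main
end

section
/- Let P and P̃ be orthogonal projectors with δ = ‖P − P̃‖ < 1/2, and let Ũ be a unitary commuting with P̃. Then for any density operator ρ with Tr(ρP) = 1, the leakage satisfies 1 − Tr(Ũ ρ Ũ† P) ≤ 4δ². -/
set_option maxHeartbeats 1000000
open scoped InnerProductSpace

private lemma trace_clm {n : ℕ} (T : EuclideanSpace ℂ (Fin n) →L[ℂ] EuclideanSpace ℂ (Fin n))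
    (e : OrthonormalBasis (Fin n) ℂ (EuclideanSpace ℂ (Fin n))) :
    LinearMap.trace ℂ (EuclideanSpace ℂ (Fin n))
      (T : EuclideanSpace ℂ (Fin n) →ₗ[ℂ] EuclideanSpace ℂ (Fin n)) = ∑ i, ⟪e i, T (e i)⟫_ℂ := by
  rw [LinearMap.trace_eq_matrix_trace ℂ e.toBasis, Matrix.trace]
  congr 1
  ext i
  rw [Matrix.diag_apply, LinearMap.toMatrix_apply, OrthonormalBasis.coe_toBasis_repr_apply,
    OrthonormalBasis.repr_apply_apply, OrthonormalBasis.coe_toBasis]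
  rfl

private lemma trace_comm_clm {n : ℕ}
    (A B : EuclideanSpace ℂ (Fin n) →L[ℂ] EuclideanSpace ℂ (Fin n)) :
    LinearMap.trace ℂ (EuclideanSpace ℂ (Fin n))
      ((A ∘L B : EuclideanSpace ℂ (Fin n) →L[ℂ] EuclideanSpace ℂ (Fin n)) :
        EuclideanSpace ℂ (Fin n) →ₗ[ℂ] EuclideanSpace ℂ (Fin n))
      = LinearMap.trace ℂ (EuclideanSpace ℂ (Fin n))
      ((B ∘L A : EuclideanSpace ℂ (Fin n) →L[ℂ] EuclideanSpace ℂ (Fin n)) :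
        EuclideanSpace ℂ (Fin n) →ₗ[ℂ] EuclideanSpace ℂ (Fin n)) := by
  rw [ContinuousLinearMap.toLinearMap_comp, ContinuousLinearMap.toLinearMap_comp, LinearMap.trace_comp_comm']

/-- Leakage bound: if `P, P̃` are orthogonal projectors with `δ = ‖P - P̃‖ < 1/2`,
`Ũ` is a unitary commuting with `P̃`, and `ρ` is a density operator with
`Tr(ρ P) = 1`, then `1 - Tr(Ũ ρ Ũ† P) ≤ 4 δ²`. -/
theorem leakage_rate_bound (n : ℕ)
    (P Pt Ut ρ : EuclideanSpace ℂ (Fin n) →L[ℂ] EuclideanSpace ℂ (Fin n))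
    (hP1 : IsIdempotentElem P) (hP2 : IsSelfAdjoint P)
    (hPt1 : IsIdempotentElem Pt) (hPt2 : IsSelfAdjoint Pt)
    (hUt : Ut ∈ unitary (EuclideanSpace ℂ (Fin n) →L[ℂ] EuclideanSpace ℂ (Fin n)))
    (hcomm : Ut ∘L Pt = Pt ∘L Ut)
    (hδ : ‖P - Pt‖ < 1 / 2)
    (hρpos : ρ.IsPositive)
    (hρtr : LinearMap.trace ℂ (EuclideanSpace ℂ (Fin n)) (ρ : EuclideanSpace ℂ (Fin n) →ₗ[ℂ] EuclideanSpace ℂ (Fin n)) = 1)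
    (hsupp : LinearMap.trace ℂ (EuclideanSpace ℂ (Fin n)) ((ρ ∘L P : EuclideanSpace ℂ (Fin n) →L[ℂ] EuclideanSpace ℂ (Fin n)) : EuclideanSpace ℂ (Fin n) →ₗ[ℂ] EuclideanSpace ℂ (Fin n)) = 1) :
    1 - (LinearMap.trace ℂ (EuclideanSpace ℂ (Fin n))
        ((Ut ∘L ρ ∘L (ContinuousLinearMap.adjoint Ut) ∘L P :
          EuclideanSpace ℂ (Fin n) →L[ℂ] EuclideanSpace ℂ (Fin n)) :
          EuclideanSpace ℂ (Fin n) →ₗ[ℂ] EuclideanSpace ℂ (Fin n))).re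
      ≤ 4 * ‖P - Pt‖ ^ 2 := by
  obtain ⟨Ud, hUd⟩ : ∃ Ud, ContinuousLinearMap.adjoint Ut = Ud := ⟨_, rfl⟩
  rw [hUd]
  obtain ⟨hUt1, hUt2⟩ := Unitary.mem_iff.mp hUt
  rw [ContinuousLinearMap.star_eq_adjoint, hUd] at hUt1 hUt2
  have hPP : ∀ x, P (P x) = P x := by
    intro x
    rw [← ContinuousLinearMap.mul_apply, hP1]
  have hUdUt : ∀ x, Ud (Ut x) = x := by
    intro x
    have : (Ud * Ut) x = (1 : EuclideanSpace ℂ (Fin n) →L[ℂ] EuclideanSpace ℂ (Fin n)) x := by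
      rw [hUt1]
    simpa using this
  have hUtUd : ∀ x, Ut (Ud x) = x := by
    intro x
    have : (Ut * Ud) x = (1 : EuclideanSpace ℂ (Fin n) →L[ℂ] EuclideanSpace ℂ (Fin n)) x := by
      rw [hUt2]
    simpa using this
  have hUtnorm : ∀ x, ‖Ut x‖ = ‖x‖ := by
    intro x
    have h1 : ⟪Ut x, Ut x⟫_ℂ = ⟪x, x⟫_ℂ := by
      rw [← ContinuousLinearMap.adjoint_inner_left, hUd, hUdUt]
    have h3 : (‖Ut x‖ : ℝ) ^ 2 = ‖x‖ ^ 2 := by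
      rw [← inner_self_eq_norm_sq (𝕜 := ℂ), ← inner_self_eq_norm_sq (𝕜 := ℂ), h1]
    nlinarith [norm_nonneg (Ut x), norm_nonneg x]
  have hUdnorm : ∀ x, ‖Ud x‖ = ‖x‖ := by
    intro x
    conv_rhs => rw [← hUtUd x]
    rw [hUtnorm]
  -- the rotated projector
  set Q := Ud ∘L (P ∘L Ut) with hQ
  have hPtconj : Ud ∘L (Pt ∘L Ut) = Pt := by
    rw [← hcomm, ← ContinuousLinearMap.comp_assoc, ← ContinuousLinearMap.mul_def Ud Ut, hUt1,
      ContinuousLinearMap.one_def, ContinuousLinearMap.id_comp]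
  have hQdiff : ∀ x, ‖(P - Q) x‖ ≤ 2 * ‖P - Pt‖ * ‖x‖ := by
    intro x
    have h' : Ud (Pt (Ut x)) = Pt x := by
      have := congrArg
        (fun f : EuclideanSpace ℂ (Fin n) →L[ℂ] EuclideanSpace ℂ (Fin n) => f x) hPtconj
      simpa using this
    have hsplit : (P - Q) x = (P - Pt) x + (Ud ∘L ((Pt - P) ∘L Ut)) x := by
      simp only [hQ, ContinuousLinearMap.sub_apply, ContinuousLinearMap.comp_apply, map_sub, h']
      abel
    rw [hsplit]
    calc ‖(P - Pt) x + (Ud ∘L ((Pt - P) ∘L Ut)) x‖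
        ≤ ‖(P - Pt) x‖ + ‖(Ud ∘L ((Pt - P) ∘L Ut)) x‖ := norm_add_le _ _
      _ ≤ ‖P - Pt‖ * ‖x‖ + ‖P - Pt‖ * ‖x‖ := by
          gcongr
          · exact ContinuousLinearMap.le_opNorm _ _
          · simp only [ContinuousLinearMap.comp_apply]
            rw [hUdnorm]
            calc ‖(Pt - P) (Ut x)‖ ≤ ‖Pt - P‖ * ‖Ut x‖ := ContinuousLinearMap.le_opNorm _ _
              _ = ‖P - Pt‖ * ‖x‖ := by rw [norm_sub_rev, hUtnorm]
      _ = 2 * ‖P - Pt‖ * ‖x‖ := by ring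
  -- eigen-decomposition of ρ
  have hρsa : IsSelfAdjoint ρ := hρpos.isSelfAdjoint
  have hsym : (ρ : EuclideanSpace ℂ (Fin n) →ₗ[ℂ] EuclideanSpace ℂ (Fin n)).IsSymmetric :=
    ContinuousLinearMap.isSelfAdjoint_iff_isSymmetric.mp hρsa
  have hn : Module.finrank ℂ (EuclideanSpace ℂ (Fin n)) = n := finrank_euclideanSpace_fin
  set e := hsym.eigenvectorBasis hn with he
  set μ := hsym.eigenvalues hn with hμ
  have heig : ∀ i, ρ (e i) = (μ i : ℂ) • e i := fun i => hsym.apply_eigenvectorBasis hn i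
  have henorm : ∀ i, ‖e i‖ = 1 := fun i => e.orthonormal.1 i
  have heinner : ∀ i, ⟪e i, e i⟫_ℂ = 1 := by
    intro i
    rw [inner_self_eq_norm_sq_to_K, henorm]
    norm_num
  have hμnonneg : ∀ i, 0 ≤ μ i := by
    intro i
    have h := hρpos.inner_nonneg_right (e i)
    rw [heig i, inner_smul_right, heinner] at h
    simpa using h
  have htr1 : ∑ i, μ i = 1 := by
    have h := hρtr
    rw [trace_clm ρ e] at h
    have h2 : ∑ i, ((μ i : ℂ)) = 1 := by
      rw [← h]
      refine Finset.sum_congr rfl fun i _ => ?_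
      rw [heig i, inner_smul_right, heinner, mul_one]
    have := congrArg Complex.re h2
    simpa using this
  -- support: P fixes eigenvectors with nonzero eigenvalue
  have hPinner : ∀ i, ⟪e i, P (e i)⟫_ℂ = ((‖P (e i)‖ ^ 2 : ℝ) : ℂ) := by
    intro i
    nth_rewrite 1 [← hPP (e i)]
    rw [← ContinuousLinearMap.adjoint_inner_left, hP2.adjoint_eq, inner_self_eq_norm_sq_to_K]
    push_cast
    rfl
  have hPnorm : ∀ i, ‖P (e i)‖ ≤ 1 := by
    intro i
    have hsq : (‖P (e i)‖ : ℝ) ^ 2 = (⟪e i, P (e i)⟫_ℂ).re := by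
      rw [hPinner, Complex.ofReal_re]
    have hcs : (⟪e i, P (e i)⟫_ℂ).re ≤ ‖P (e i)‖ := by
      calc (⟪e i, P (e i)⟫_ℂ).re ≤ ‖⟪e i, P (e i)⟫_ℂ‖ := Complex.re_le_norm _
        _ ≤ ‖e i‖ * ‖P (e i)‖ := norm_inner_le_norm _ _
        _ = ‖P (e i)‖ := by rw [henorm]; ring
    nlinarith [norm_nonneg (P (e i))]
  have hsupp2 : ∑ i, μ i * ‖P (e i)‖ ^ 2 = 1 := by
    have h := hsupp
    rw [trace_comm_clm, trace_clm (P ∘L ρ) e] at h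
    have h2 : ∑ i, (((μ i * ‖P (e i)‖ ^ 2 : ℝ)) : ℂ) = 1 := by
      rw [← h]
      refine Finset.sum_congr rfl fun i _ => ?_
      rw [ContinuousLinearMap.comp_apply, heig i, map_smul, inner_smul_right, hPinner]
      push_cast
      ring
    have h3 := congrArg Complex.re h2
    rw [Complex.re_sum] at h3
    simpa only [Complex.ofReal_re, Complex.one_re] using h3
  have hsupp3 : ∀ i, μ i * (1 - ‖P (e i)‖ ^ 2) = 0 := by
    have hsum : ∑ i, μ i * (1 - ‖P (e i)‖ ^ 2) = 0 := by
      have heq : ∑ i, μ i * (1 - ‖P (e i)‖ ^ 2)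
          = (∑ i, μ i) - ∑ i, μ i * ‖P (e i)‖ ^ 2 := by
        rw [← Finset.sum_sub_distrib]
        refine Finset.sum_congr rfl fun i _ => by ring
      rw [heq, htr1, hsupp2, sub_self]
    have hnn : ∀ j ∈ Finset.univ, (0:ℝ) ≤ μ j * (1 - ‖P (e j)‖ ^ 2) := by
      intro j _
      have h1 := hμnonneg j
      have h2 := hPnorm j
      have h3 : ‖P (e j)‖ ^ 2 ≤ 1 := by nlinarith [norm_nonneg (P (e j))]
      exact mul_nonneg h1 (by linarith)
    intro i
    exact (Finset.sum_eq_zero_iff_of_nonneg hnn).mp hsum i (Finset.mem_univ i)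
  have hPfix : ∀ i, μ i ≠ 0 → P (e i) = e i := by
    intro i hi
    have h1 : ‖P (e i)‖ ^ 2 = 1 := by
      rcases mul_eq_zero.mp (hsupp3 i) with h | h
      · exact absurd h hi
      · linarith
    have hre : (⟪e i, P (e i)⟫_ℂ).re = 1 := by
      rw [hPinner, Complex.ofReal_re, h1]
    have hz : ‖e i - P (e i)‖ ^ 2 = 0 := by
      rw [norm_sub_sq (𝕜 := ℂ)]
      simp only [RCLike.re_to_complex]
      rw [hre, henorm, h1]
      ring
    have h0 : e i - P (e i) = 0 := norm_eq_zero.mp (pow_eq_zero_iff two_ne_zero |>.mp hz)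
    exact (sub_eq_zero.mp h0).symm
  -- inner products with Q
  have hQinner : ∀ i, ⟪e i, Q (e i)⟫_ℂ = ((‖Q (e i)‖ ^ 2 : ℝ) : ℂ) := by
    intro i
    have h1 : ⟪e i, Q (e i)⟫_ℂ = ⟪P (Ut (e i)), P (Ut (e i))⟫_ℂ := by
      rw [hQ]
      simp only [ContinuousLinearMap.comp_apply]
      rw [← hUd, ContinuousLinearMap.adjoint_inner_right]
      nth_rewrite 1 [← hPP (Ut (e i))]
      rw [← ContinuousLinearMap.adjoint_inner_left, hP2.adjoint_eq]
    have h2 : ‖Q (e i)‖ = ‖P (Ut (e i))‖ := by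
      rw [hQ]
      simp only [ContinuousLinearMap.comp_apply]
      rw [hUdnorm]
    rw [h1, h2, inner_self_eq_norm_sq_to_K]
    push_cast
    rfl
  -- compute the trace in the goal
  have htr2 : LinearMap.trace ℂ (EuclideanSpace ℂ (Fin n))
      ((Ut ∘L ρ ∘L Ud ∘L P :
        EuclideanSpace ℂ (Fin n) →L[ℂ] EuclideanSpace ℂ (Fin n)) :
        EuclideanSpace ℂ (Fin n) →ₗ[ℂ] EuclideanSpace ℂ (Fin n))
      = ∑ i, (((μ i * ‖Q (e i)‖ ^ 2 : ℝ)) : ℂ) := by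
    rw [trace_comm_clm Ut (ρ ∘L Ud ∘L P)]
    have hassoc : (ρ ∘L Ud ∘L P) ∘L Ut = ρ ∘L Q := by
      rw [hQ, ContinuousLinearMap.comp_assoc, ContinuousLinearMap.comp_assoc]
    rw [hassoc, trace_comm_clm ρ Q, trace_clm (Q ∘L ρ) e]
    refine Finset.sum_congr rfl fun i _ => ?_
    rw [ContinuousLinearMap.comp_apply, heig i, map_smul, inner_smul_right, hQinner]
    push_cast
    ring
  rw [htr2, Complex.re_sum]
  simp only [Complex.ofReal_re]
  have hkey : ∀ i, μ i - μ i * ‖Q (e i)‖ ^ 2 ≤ μ i * (4 * ‖P - Pt‖ ^ 2) := by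
    intro i
    rcases eq_or_ne (μ i) 0 with h | h
    · rw [h]; ring_nf; exact le_refl 0
    · have hfix := hPfix i h
      have hd : ‖e i - Q (e i)‖ ≤ 2 * ‖P - Pt‖ := by
        have := hQdiff (e i)
        rw [ContinuousLinearMap.sub_apply, hfix, henorm, mul_one] at this
        exact this
      have hre : (⟪e i, Q (e i)⟫_ℂ).re = ‖Q (e i)‖ ^ 2 := by
        rw [hQinner, Complex.ofReal_re]
      have hpyth : ‖e i - Q (e i)‖ ^ 2 = 1 - ‖Q (e i)‖ ^ 2 := by
        rw [norm_sub_sq (𝕜 := ℂ)]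
        simp only [RCLike.re_to_complex]
        rw [hre, henorm]
        ring
      have hb : 1 - ‖Q (e i)‖ ^ 2 ≤ 4 * ‖P - Pt‖ ^ 2 := by
        rw [← hpyth]
        nlinarith [norm_nonneg (e i - Q (e i)), norm_nonneg (P - Pt)]
      have := hμnonneg i
      nlinarith
  calc 1 - ∑ i, μ i * ‖Q (e i)‖ ^ 2
      = ∑ i, (μ i - μ i * ‖Q (e i)‖ ^ 2) := by
        rw [Finset.sum_sub_distrib, htr1]
    _ ≤ ∑ i, μ i * (4 * ‖P - Pt‖ ^ 2) := Finset.sum_le_sum fun i _ => hkey i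
    _ = (∑ i, μ i) * (4 * ‖P - Pt‖ ^ 2) := by rw [← Finset.sum_mul]
    _ = 4 * ‖P - Pt‖ ^ 2 := by rw [htr1, one_mul]
end

section
/- Let H = Σ_{l=1}^Γ H_l be Hermitian with Hermitian layers satisfying [H_l, H_m] = 0 whenever |l − m| > 1. Then for every eigenvector ψ of H and every l, ⟨ψ, [H_l, H_{l+1}] ψ⟩ = 0. Consequently, the first-order Trotter perturbation V = (i/2) Σ_{l>m} [H_l, H_m] satisfies ⟨ψ, V ψ⟩ = 0. -/
open Matrix

private lemma dot_mulVec_sum {n : ℕ} {ι : Type*} (s : Finset ι) (v w : Fin n → ℂ)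
    (M : ι → Matrix (Fin n) (Fin n) ℂ) :
    v ⬝ᵥ (∑ i ∈ s, M i) *ᵥ w = ∑ i ∈ s, v ⬝ᵥ (M i) *ᵥ w := by
  classical
  induction s using Finset.induction with
  | empty => simp
  | insert _ _ h ih => simp [Finset.sum_insert h, Matrix.add_mulVec, dotProduct_add, ih]

/-- For a Hermitian `H = Σ H_l` with Hermitian layers satisfying `[H_l, H_m] = 0`
for `|l - m| > 1`, every eigenvector `ψ` of `H` satisfies
`⟨ψ, [H_l, H_{l+1}] ψ⟩ = 0` for all `l`, and consequently the first-order Trotter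
perturbation `V = (i/2) Σ_{l>m} [H_l, H_m]` satisfies `⟨ψ, V ψ⟩ = 0`. -/
theorem layered_commutator_expectation_zero (n Γ : ℕ)
    (H : Fin Γ → Matrix (Fin n) (Fin n) ℂ)
    (hherm : ∀ l, (H l).IsHermitian)
    (hcomm : ∀ l m : Fin Γ, 1 < |(l : ℤ) - (m : ℤ)| → H l * H m = H m * H l)
    (ψ : Fin n → ℂ) (hψ : ψ ≠ 0) (E : ℂ)
    (heig : (∑ l, H l).mulVec ψ = E • ψ) :
    (∀ (l : ℕ) (h1 : l < Γ) (h2 : l + 1 < Γ),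
      star ψ ⬝ᵥ (H ⟨l, h1⟩ * H ⟨l + 1, h2⟩ - H ⟨l + 1, h2⟩ * H ⟨l, h1⟩).mulVec ψ = 0)
    ∧ star ψ ⬝ᵥ
        ((Complex.I / 2) •
          ∑ l : Fin Γ, ∑ m ∈ Finset.univ.filter (· < l),
            (H l * H m - H m * H l)).mulVec ψ = 0 := by
  have hHtotH : (∑ l, H l).IsHermitian := by
    show (∑ l, H l)ᴴ = ∑ l, H l
    rw [Matrix.conjTranspose_sum]
    exact Finset.sum_congr rfl fun l _ => (hherm l).eq
  have hc : star ψ ⬝ᵥ ψ ≠ 0 := by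
    open scoped ComplexOrder in
    exact fun h => hψ (dotProduct_star_self_eq_zero.mp h)
  have hstarv : star ψ ᵥ* (∑ l, H l) = star E • star ψ := by
    rw [← hHtotH.eq, ← Matrix.star_mulVec, heig, star_smul]
  have hE : star E = E := by
    have h1 : star ψ ⬝ᵥ (∑ l, H l) *ᵥ ψ = E * (star ψ ⬝ᵥ ψ) := by
      rw [heig, dotProduct_smul, smul_eq_mul]
    have h2 : star ψ ⬝ᵥ (∑ l, H l) *ᵥ ψ = star E * (star ψ ⬝ᵥ ψ) := by
      rw [Matrix.dotProduct_mulVec, hstarv, smul_dotProduct, smul_eq_mul]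
    exact mul_right_cancel₀ hc (h2.symm.trans h1)
  -- Key fact: the expectation of the commutator of anything with the total Hamiltonian is 0.
  have hcomH : ∀ A : Matrix (Fin n) (Fin n) ℂ,
      star ψ ⬝ᵥ (A * (∑ l, H l) - (∑ l, H l) * A) *ᵥ ψ = 0 := by
    intro A
    have l1 : star ψ ⬝ᵥ (A * (∑ l, H l)) *ᵥ ψ = E * (star ψ ⬝ᵥ A *ᵥ ψ) := by
      rw [← Matrix.mulVec_mulVec, heig, Matrix.mulVec_smul, dotProduct_smul, smul_eq_mul]
    have l2 : star ψ ⬝ᵥ ((∑ l, H l) * A) *ᵥ ψ = E * (star ψ ⬝ᵥ A *ᵥ ψ) := by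
      rw [← Matrix.mulVec_mulVec, Matrix.dotProduct_mulVec _ (∑ l, H l), hstarv,
        smul_dotProduct, smul_eq_mul, hE, Matrix.dotProduct_mulVec]
    rw [Matrix.sub_mulVec, dotProduct_sub, l1, l2, sub_self]
  -- Summed form: for each layer l', Σ_m ⟨[H_l', H_m]⟩ = 0.
  have hsum : ∀ (l' : Fin Γ), ∑ m, star ψ ⬝ᵥ (H l' * H m - H m * H l') *ᵥ ψ = 0 := by
    intro l'
    have hS : ∑ m, (H l' * H m - H m * H l')
        = H l' * (∑ m, H m) - (∑ m, H m) * H l' := by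
      rw [Finset.sum_sub_distrib, Finset.mul_sum, Finset.sum_mul]
    rw [← dot_mulVec_sum, hS]
    exact hcomH _
  -- terms with distance > 1 vanish as matrices
  have hfar : ∀ (a b : Fin Γ), 1 < |(a : ℤ) - (b : ℤ)| →
      star ψ ⬝ᵥ (H a * H b - H b * H a) *ᵥ ψ = 0 := by
    intro a b hab
    rw [hcomm a b hab, sub_self, Matrix.zero_mulVec, dotProduct_zero]
  have hdiag : ∀ (a : Fin Γ), star ψ ⬝ᵥ (H a * H a - H a * H a) *ᵥ ψ = 0 := by
    intro a; rw [sub_self, Matrix.zero_mulVec, dotProduct_zero]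
  have hswap : ∀ (a b : Fin Γ), star ψ ⬝ᵥ (H a * H b - H b * H a) *ᵥ ψ = 0 →
      star ψ ⬝ᵥ (H b * H a - H a * H b) *ᵥ ψ = 0 := by
    intro a b hab
    rw [show H b * H a - H a * H b = -(H a * H b - H b * H a) from (neg_sub _ _).symm,
      Matrix.neg_mulVec, dotProduct_neg, hab, neg_zero]
  have part1 : ∀ (l : ℕ) (h1 : l < Γ) (h2 : l + 1 < Γ),
      star ψ ⬝ᵥ (H ⟨l, h1⟩ * H ⟨l + 1, h2⟩ - H ⟨l + 1, h2⟩ * H ⟨l, h1⟩) *ᵥ ψ = 0 := by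
    intro l
    induction l with
    | zero =>
      intro h1 h2
      have key := hsum ⟨0, h1⟩
      rw [Finset.sum_eq_single (⟨1, h2⟩ : Fin Γ)
        (fun m _ hmne => by
          have hm2 : (m : ℕ) ≠ 1 := fun h => hmne (Fin.ext h)
          rcases Nat.eq_zero_or_pos (m : ℕ) with h | h
          · have : m = ⟨0, h1⟩ := Fin.ext h
            rw [this]; exact hdiag _
          · refine hfar _ _ ?_
            rw [lt_abs]
            have : 2 ≤ (m : ℕ) := by omega
            simp only [Fin.val_mk]
            omega)
        (fun h => absurd (Finset.mem_univ _) h)] at key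
      exact key
    | succ k ih =>
      intro h1 h2
      have key := hsum ⟨k + 1, h1⟩
      rw [Finset.sum_eq_single (⟨k + 2, h2⟩ : Fin Γ)
        (fun m _ hmne => by
          have hm2 : (m : ℕ) ≠ k + 2 := fun h => hmne (Fin.ext h)
          rcases Nat.lt_trichotomy (m : ℕ) (k + 1) with h | h | h
          · rcases Nat.lt_or_ge (m : ℕ) k with h' | h'
            · refine hfar _ _ ?_
              rw [lt_abs]; simp only [Fin.val_mk]; omega
            · have hmk : (m : ℕ) = k := by omega
              have : m = ⟨k, lt_trans (Nat.lt_succ_self k) h1⟩ := Fin.ext hmk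
              rw [this]
              exact hswap _ _ (ih (lt_trans (Nat.lt_succ_self k) h1) h1)
          · have : m = ⟨k + 1, h1⟩ := Fin.ext h
            rw [this]; exact hdiag _
          · refine hfar _ _ ?_
            rw [lt_abs]; simp only [Fin.val_mk]; omega)
        (fun h => absurd (Finset.mem_univ _) h)] at key
      exact key
  refine ⟨part1, ?_⟩
  rw [Matrix.smul_mulVec, dotProduct_smul, smul_eq_mul, dot_mulVec_sum]
  have : ∑ l : Fin Γ, star ψ ⬝ᵥ (∑ m ∈ Finset.univ.filter (· < l),
      (H l * H m - H m * H l)) *ᵥ ψ = 0 := by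
    refine Finset.sum_eq_zero fun l _ => ?_
    rw [dot_mulVec_sum]
    refine Finset.sum_eq_zero fun m hm => ?_
    have hml : (m : ℕ) < (l : ℕ) := by
      simpa using (Finset.mem_filter.mp hm).2
    rcases Nat.lt_or_ge ((m : ℕ) + 1) (l : ℕ) with h | h
    · refine hfar _ _ ?_
      rw [lt_abs]; omega
    · have hml1 : (m : ℕ) + 1 = (l : ℕ) := by omega
      have h2' : (m : ℕ) + 1 < Γ := by rw [hml1]; exact l.isLt
      have hl : H l = H ⟨(m : ℕ) + 1, h2'⟩ := congrArg H (Fin.ext hml1.symm)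
      have hmm : H m = H ⟨(m : ℕ), m.isLt⟩ := congrArg H (Fin.ext rfl)
      rw [hl, hmm]
      exact hswap _ _ (part1 (m : ℕ) m.isLt h2')
  rw [this, mul_zero]
end

section
/- Let H(s) = H + sV with H, V Hermitian, and let ψ(s) be a smooth family of unit eigenvectors of H(s) with eigenvalue E(s), where the eigenvalue is separated from the rest of the spectrum by a gap ≥ λ > 0 for all s ∈ [0, s₀]. Write f(s) = 1 − |⟨ψ(0), ψ(s)⟩|² and assume f(s) ≤ ‖V‖² s² / λ². If additionally ⟨ψ(0), V ψ(0)⟩ = 0, ‖V‖ s ≤ λ, and ‖H‖ ≥ 2λ, then |E(s) − E(0)| ≤ C · ‖V‖² ‖H‖ s² / λ² for an absolute constant C. -/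
open scoped InnerProductSpace

set_option maxHeartbeats 1000000 in
/-- Second-order energy shift: there is an absolute constant `C` such that for any
smooth eigenpair branch `(ψ(s), E(s))` of `H(s) = H + sV` whose eigenvalue is
gap-separated by `λ`, if `f(s) = 1 - |⟨ψ(0), ψ(s)⟩|² ≤ ‖V‖²s²/λ²`,
`⟨ψ(0), V ψ(0)⟩ = 0`, `‖V‖ s ≤ λ` and `‖H‖ ≥ 2λ`, then
`|E(s) - E(0)| ≤ C ‖V‖² ‖H‖ s² / λ²`. -/
theorem second_order_energy_shift :
    ∃ C : ℝ, 0 < C ∧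
      ∀ (n : ℕ) (H V : EuclideanSpace ℂ (Fin n) →L[ℂ] EuclideanSpace ℂ (Fin n)),
        IsSelfAdjoint H → IsSelfAdjoint V →
        ∀ (s₀ lam : ℝ), 0 ≤ s₀ → 0 < lam →
        ∀ (ψ : ℝ → EuclideanSpace ℂ (Fin n)) (Ev : ℝ → ℝ),
        ContDiff ℝ 1 ψ →
        (∀ s ∈ Set.Icc 0 s₀, (H + (s : ℂ) • V) (ψ s) = (Ev s : ℂ) • ψ s) →
        (∀ s ∈ Set.Icc 0 s₀, ‖ψ s‖ = 1) →
        (∀ s ∈ Set.Icc 0 s₀, ∀ μ : ℝ,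
          (∃ v, v ≠ 0 ∧ (H + (s : ℂ) • V) v = (μ : ℂ) • v) → μ ≠ Ev s →
            lam ≤ |μ - Ev s|) →
        (∀ s ∈ Set.Icc 0 s₀,
          1 - ‖⟪ψ 0, ψ s⟫_ℂ‖ ^ 2 ≤ ‖V‖ ^ 2 * s ^ 2 / lam ^ 2) →
        ⟪ψ 0, V (ψ 0)⟫_ℂ = 0 →
        2 * lam ≤ ‖H‖ →
        ∀ s ∈ Set.Icc 0 s₀, ‖V‖ * s ≤ lam →
          |Ev s - Ev 0| ≤ C * ‖V‖ ^ 2 * ‖H‖ * s ^ 2 / lam ^ 2 := by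
  refine ⟨4, by norm_num, ?_⟩
  intro n H V hH hV s₀ lam hs₀ hlam ψ Ev hψC1 heig hnorm hgap hf hV0 hHlam s hs hVs
  obtain ⟨hs0, hss0⟩ := hs
  have h0mem : (0:ℝ) ∈ Set.Icc 0 s₀ := ⟨le_refl 0, hs₀⟩
  have hψ0 : ‖ψ 0‖ = 1 := hnorm 0 h0mem
  have hψs : ‖ψ s‖ = 1 := hnorm s ⟨hs0, hss0⟩
  set a : ℂ := ⟪ψ 0, ψ s⟫_ℂ with ha
  set w : EuclideanSpace ℂ (Fin n) := ψ s - a • ψ 0 with hw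
  have hdecomp : ψ s = a • ψ 0 + w := by simp [hw]
  have hself0 : ⟪ψ 0, ψ 0⟫_ℂ = 1 := by
    rw [inner_self_eq_norm_sq_to_K, hψ0]; norm_num
  have hselfs : ⟪ψ s, ψ s⟫_ℂ = 1 := by
    rw [inner_self_eq_norm_sq_to_K, hψs]; norm_num
  have hwo : ⟪ψ 0, w⟫_ℂ = 0 := by
    rw [hw, inner_sub_right, inner_smul_right, hself0, mul_one, ← ha, sub_self]
  have hwo' : ⟪w, ψ 0⟫_ℂ = 0 := by
    rw [← inner_conj_symm, hwo, map_zero]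
  have hH0 : H (ψ 0) = ((Ev 0 : ℂ)) • ψ 0 := by
    have := heig 0 h0mem
    simpa using this
  -- norm of w squared
  have hna : ‖a‖ ≤ 1 := by
    calc ‖a‖ ≤ ‖ψ 0‖ * ‖ψ s‖ := norm_inner_le_norm _ _
    _ = 1 := by rw [hψ0, hψs, mul_one]
  have hww : ⟪w, w⟫_ℂ = ((1 - ‖a‖^2 : ℝ) : ℂ) := by
    have h2 : ⟪w, w⟫_ℂ = ⟪ψ s, ψ s⟫_ℂ - (starRingEnd ℂ a) * a := by
      rw [hw]
      simp only [inner_sub_left, inner_sub_right, inner_smul_left, inner_smul_right,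
        hself0, ← ha]
      rw [← inner_conj_symm (ψ s) (ψ 0), ← ha]
      ring
    rw [h2, hselfs]
    have h3 : (starRingEnd ℂ a) * a = ((‖a‖^2 : ℝ) : ℂ) := by
      rw [Complex.conj_mul']
      push_cast
      ring
    rw [h3]
    push_cast
    ring
  have hwn : ‖w‖^2 = 1 - ‖a‖^2 := by
    have h1 : (((‖w‖^2 : ℝ)) : ℂ) = ((1 - ‖a‖^2 : ℝ) : ℂ) := by
      rw [← hww, inner_self_eq_norm_sq_to_K]; norm_cast
    exact_mod_cast h1
  have hFle : ‖w‖^2 ≤ ‖V‖^2 * s^2 / lam^2 := by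
    rw [hwn]; exact hf s ⟨hs0, hss0⟩
  have hwle : ‖w‖ ≤ ‖V‖ * s / lam := by
    have hFle' : ‖w‖^2 ≤ (‖V‖ * s / lam)^2 := by
      calc ‖w‖^2 ≤ ‖V‖^2 * s^2 / lam^2 := hFle
      _ = (‖V‖ * s / lam)^2 := by rw [div_pow, mul_pow]
    have hB0 : 0 ≤ ‖V‖ * s / lam := div_nonneg (mul_nonneg (norm_nonneg V) hs0) hlam.le
    nlinarith [norm_nonneg w, hFle']
  -- eigenvalue as expectation
  have hEs : ((Ev s : ℂ)) = ⟪ψ s, H (ψ s)⟫_ℂ + (s:ℂ) * ⟪ψ s, V (ψ s)⟫_ℂ := by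
    have h1 : ⟪ψ s, (H + (s:ℂ) • V) (ψ s)⟫_ℂ = (Ev s : ℂ) := by
      rw [heig s ⟨hs0, hss0⟩, inner_smul_right, hselfs, mul_one]
    rw [← h1, ContinuousLinearMap.add_apply, inner_add_right,
      ContinuousLinearMap.smul_apply, inner_smul_right]
  have hE0 : ((Ev 0 : ℂ)) = ⟪ψ 0, H (ψ 0)⟫_ℂ := by
    rw [hH0, inner_smul_right, hself0, mul_one]
  -- symmetric trick
  have hHw0 : ⟪ψ 0, H w⟫_ℂ = 0 := by
    have hsym : ⟪H (ψ 0), w⟫_ℂ = ⟪ψ 0, H w⟫_ℂ := hH.isSymmetric (ψ 0) w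
    rw [← hsym, hH0, inner_smul_left, hwo, mul_zero]
  -- expand ⟪ψ s, H ψ s⟫
  have hHs : ⟪ψ s, H (ψ s)⟫_ℂ = (starRingEnd ℂ a) * a * (Ev 0 : ℂ) + ⟪w, H w⟫_ℂ := by
    conv_lhs => rw [hdecomp]
    rw [map_add, map_smul, hH0]
    simp only [inner_add_left, inner_add_right, inner_smul_left, inner_smul_right,
      hself0, hwo, hwo', hHw0]
    ring
  -- expand ⟪ψ s, V ψ s⟫
  have hVsE : ⟪ψ s, V (ψ s)⟫_ℂ = (starRingEnd ℂ a) * ⟪ψ 0, V w⟫_ℂ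
      + a * ⟪w, V (ψ 0)⟫_ℂ + ⟪w, V w⟫_ℂ := by
    conv_lhs => rw [hdecomp]
    rw [map_add, map_smul]
    simp only [inner_add_left, inner_add_right, inner_smul_left, inner_smul_right, hV0]
    ring
  -- key identity
  have key : ((Ev s - Ev 0 : ℝ) : ℂ) = ((‖a‖^2 - 1 : ℝ) : ℂ) * (Ev 0 : ℂ) + ⟪w, H w⟫_ℂ
      + (s:ℂ) * ((starRingEnd ℂ a) * ⟪ψ 0, V w⟫_ℂ + a * ⟪w, V (ψ 0)⟫_ℂ + ⟪w, V w⟫_ℂ) := by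
    have hconj : (starRingEnd ℂ a) * a = ((‖a‖^2 : ℝ) : ℂ) := by
      rw [Complex.conj_mul']; push_cast; ring
    push_cast
    rw [hEs, hHs, hVsE, hconj]
    push_cast
    ring
  -- bounds on the pieces
  have hE0b : ‖((Ev 0 : ℝ) : ℂ)‖ ≤ ‖H‖ := by
    rw [hE0]
    calc ‖⟪ψ 0, H (ψ 0)⟫_ℂ‖ ≤ ‖ψ 0‖ * ‖H (ψ 0)‖ := norm_inner_le_norm _ _
    _ ≤ ‖ψ 0‖ * (‖H‖ * ‖ψ 0‖) := by
        gcongr; exact H.le_opNorm _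
    _ = ‖H‖ := by rw [hψ0]; ring
  have hwHw : ‖⟪w, H w⟫_ℂ‖ ≤ ‖H‖ * ‖w‖^2 := by
    calc ‖⟪w, H w⟫_ℂ‖ ≤ ‖w‖ * ‖H w‖ := norm_inner_le_norm _ _
    _ ≤ ‖w‖ * (‖H‖ * ‖w‖) := by gcongr; exact H.le_opNorm _
    _ = ‖H‖ * ‖w‖^2 := by ring
  have hVw1 : ‖⟪ψ 0, V w⟫_ℂ‖ ≤ ‖V‖ * ‖w‖ := by
    calc ‖⟪ψ 0, V w⟫_ℂ‖ ≤ ‖ψ 0‖ * ‖V w‖ := norm_inner_le_norm _ _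
    _ ≤ ‖ψ 0‖ * (‖V‖ * ‖w‖) := by gcongr; exact V.le_opNorm _
    _ = ‖V‖ * ‖w‖ := by rw [hψ0]; ring
  have hVw2 : ‖⟪w, V (ψ 0)⟫_ℂ‖ ≤ ‖V‖ * ‖w‖ := by
    calc ‖⟪w, V (ψ 0)⟫_ℂ‖ ≤ ‖w‖ * ‖V (ψ 0)‖ := norm_inner_le_norm _ _
    _ ≤ ‖w‖ * (‖V‖ * ‖ψ 0‖) := by gcongr; exact V.le_opNorm _
    _ = ‖V‖ * ‖w‖ := by rw [hψ0]; ring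
  have hVw3 : ‖⟪w, V w⟫_ℂ‖ ≤ ‖V‖ * ‖w‖^2 := by
    calc ‖⟪w, V w⟫_ℂ‖ ≤ ‖w‖ * ‖V w‖ := norm_inner_le_norm _ _
    _ ≤ ‖w‖ * (‖V‖ * ‖w‖) := by gcongr; exact V.le_opNorm _
    _ = ‖V‖ * ‖w‖^2 := by ring
  have ht1 : ‖((‖a‖^2 - 1 : ℝ) : ℂ) * (Ev 0 : ℂ)‖ ≤ ‖w‖^2 * ‖H‖ := by
    rw [norm_mul, Complex.norm_real, Real.norm_eq_abs, abs_of_nonpos (by nlinarith)]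
    have h4 : -(‖a‖^2 - 1) = ‖w‖^2 := by rw [hwn]; ring
    rw [h4]
    have hF0 : 0 ≤ ‖w‖^2 := by positivity
    exact mul_le_mul_of_nonneg_left hE0b hF0
  have ht3 : ‖(s:ℂ) * ((starRingEnd ℂ a) * ⟪ψ 0, V w⟫_ℂ + a * ⟪w, V (ψ 0)⟫_ℂ + ⟪w, V w⟫_ℂ)‖
      ≤ s * (‖V‖ * ‖w‖ + ‖V‖ * ‖w‖ + ‖V‖ * ‖w‖^2) := by
    rw [norm_mul, Complex.norm_real, Real.norm_eq_abs, abs_of_nonneg hs0]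
    refine mul_le_mul_of_nonneg_left ?_ hs0
    calc ‖(starRingEnd ℂ a) * ⟪ψ 0, V w⟫_ℂ + a * ⟪w, V (ψ 0)⟫_ℂ + ⟪w, V w⟫_ℂ‖
        ≤ ‖(starRingEnd ℂ a) * ⟪ψ 0, V w⟫_ℂ‖ + ‖a * ⟪w, V (ψ 0)⟫_ℂ‖ + ‖⟪w, V w⟫_ℂ‖ :=
          norm_add₃_le
    _ ≤ ‖V‖ * ‖w‖ + ‖V‖ * ‖w‖ + ‖V‖ * ‖w‖^2 := by
        refine add_le_add (add_le_add ?_ ?_) hVw3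
        · rw [norm_mul, RCLike.norm_conj]
          calc ‖a‖ * ‖⟪ψ 0, V w⟫_ℂ‖ ≤ 1 * (‖V‖ * ‖w‖) :=
                mul_le_mul hna hVw1 (norm_nonneg _) (by norm_num)
          _ = ‖V‖ * ‖w‖ := by ring
        · rw [norm_mul]
          calc ‖a‖ * ‖⟪w, V (ψ 0)⟫_ℂ‖ ≤ 1 * (‖V‖ * ‖w‖) :=
                mul_le_mul hna hVw2 (norm_nonneg _) (by norm_num)
          _ = ‖V‖ * ‖w‖ := by ring
  -- put together
  have hmain : |Ev s - Ev 0| ≤ ‖w‖^2 * ‖H‖ + ‖H‖ * ‖w‖^2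
      + s * (‖V‖ * ‖w‖ + ‖V‖ * ‖w‖ + ‖V‖ * ‖w‖^2) := by
    have h5 : |Ev s - Ev 0| = ‖((Ev s - Ev 0 : ℝ) : ℂ)‖ := by
      rw [Complex.norm_real, Real.norm_eq_abs]
    rw [h5, key]
    calc ‖_ + _ + _‖ ≤ ‖((‖a‖^2 - 1 : ℝ) : ℂ) * (Ev 0 : ℂ)‖ + ‖⟪w, H w⟫_ℂ‖
          + ‖(s:ℂ) * ((starRingEnd ℂ a) * ⟪ψ 0, V w⟫_ℂ + a * ⟪w, V (ψ 0)⟫_ℂ + ⟪w, V w⟫_ℂ)‖ :=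
        norm_add₃_le
    _ ≤ ‖w‖^2 * ‖H‖ + ‖H‖ * ‖w‖^2 + s * (‖V‖ * ‖w‖ + ‖V‖ * ‖w‖ + ‖V‖ * ‖w‖^2) := by
        exact add_le_add (add_le_add ht1 hwHw) ht3
  -- final arithmetic
  rw [le_div_iff₀ (by positivity : (0:ℝ) < lam^2)] at hFle
  rw [le_div_iff₀ hlam] at hwle
  have hF0 : 0 ≤ ‖w‖^2 := by positivity
  have hw0 : 0 ≤ ‖w‖ := norm_nonneg w
  have hV0' : 0 ≤ ‖V‖ := norm_nonneg V
  have hH0' : (0:ℝ) ≤ ‖H‖ := by linarith [hlam.le]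
  rw [le_div_iff₀ (by positivity : (0:ℝ) < lam^2)]
  have h0 := mul_le_mul_of_nonneg_right hmain (sq_nonneg lam)
  have h1 := mul_le_mul_of_nonneg_left hFle hH0'
  have h2 := mul_le_mul_of_nonneg_left hFle hlam.le
  have h3 := mul_le_mul_of_nonneg_left hwle (mul_nonneg (mul_nonneg hs0 hV0') hlam.le)
  have h4 := mul_le_mul_of_nonneg_right hVs (mul_nonneg hF0 (sq_nonneg lam))
  have h5 := mul_le_mul_of_nonneg_left hHlam
    (mul_nonneg (mul_nonneg hV0' hV0') (mul_nonneg hs0 hs0))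
  nlinarith [h0, h1, h2, h3, h4, h5, sq_nonneg lam, mul_pos hlam hlam,
    mul_nonneg (mul_nonneg hV0' hs0) hlam.le]
end

section
/- Let A, B be n×n complex matrices and δt > 0 with ‖A‖δt, ‖B‖δt small. Then e^{−iAδt} e^{−iBδt} = e^{−i H̃ δt} where H̃ = A + B − (iδt/2)[A, B] + R with ‖R‖ ≤ C δt² (‖A‖+‖B‖)³ for an absolute constant C, provided (‖A‖+‖B‖)δt ≤ 1/4. -/
set_option linter.unusedSectionVars false
set_option linter.unusedVariables false

open NormedSpace Nat

section LogDef
variable {𝔸 : Type*} [NormedRing 𝔸] [NormedAlgebra ℂ 𝔸] [CompleteSpace 𝔸]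

noncomputable def logOneAdd (W : 𝔸) : 𝔸 := ∑' k : ℕ, ((-1 : ℂ)^k / (k+1)) • W^(k+1)

lemma logCoeff_norm_le (k : ℕ) : ‖((-1 : ℂ)^k / (k+1))‖ ≤ 1/(k+1) := by
  rw [norm_div, norm_pow, norm_neg, norm_one, one_pow]
  have : ((k : ℂ)+1) = ((k+1 : ℕ) : ℂ) := by push_cast; ring
  rw [this, Complex.norm_natCast]
  push_cast
  exact le_refl _

lemma logTerm_norm_le (W : 𝔸) (k : ℕ) : ‖((-1 : ℂ)^k / (k+1)) • W^(k+1)‖ ≤ ‖W‖^(k+1)/(k+1) := by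
  rw [norm_smul]
  have h2 : ‖W^(k+1)‖ ≤ ‖W‖^(k+1) := norm_pow_le' _ (Nat.succ_pos _)
  calc ‖((-1:ℂ)^k / (k+1))‖ * ‖W^(k+1)‖ ≤ (1/(k+1)) * ‖W‖^(k+1) := by
        apply mul_le_mul (logCoeff_norm_le k) h2 (norm_nonneg _) (by positivity)
    _ = ‖W‖^(k+1)/(k+1) := by ring

lemma logTerm_norm_le' (W : 𝔸) (k : ℕ) : ‖((-1 : ℂ)^k / (k+1)) • W^(k+1)‖ ≤ ‖W‖^(k+1) := by
  refine (logTerm_norm_le W k).trans ?_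
  rw [div_le_iff₀ (by positivity)]
  nlinarith [pow_nonneg (norm_nonneg W) (k+1), (Nat.cast_nonneg (α := ℝ) k)]

lemma logSummable {W : 𝔸} (h : ‖W‖ < 1) :
    Summable fun k : ℕ => ((-1 : ℂ)^k / (k+1)) • W^(k+1) := by
  apply Summable.of_norm_bounded ((summable_geometric_of_lt_one (norm_nonneg W) h).mul_left ‖W‖)
  intro k
  calc ‖((-1:ℂ)^k / (k+1)) • W^(k+1)‖ ≤ ‖W‖^(k+1) := logTerm_norm_le' W k
    _ = ‖W‖ * ‖W‖^k := by rw [pow_succ]; ring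

end LogDef
section Comm
variable {𝔸 : Type*} [NormedCommRing 𝔸] [NormedAlgebra ℂ 𝔸] [CompleteSpace 𝔸]

omit [CompleteSpace 𝔸] in
lemma real_smul_eq (r : ℝ) (x : 𝔸) : r • x = (r : ℂ) • x := by
  rw [← algebraMap_smul ℂ r x, Complex.coe_algebraMap]

omit [CompleteSpace 𝔸] in
lemma d_norm_le (W : 𝔸) (t : ℝ) (k : ℕ) :
    ‖((-t : ℂ))^k • W^(k+1)‖ ≤ ‖W‖ * (|t| * ‖W‖)^k := by
  rw [norm_smul, norm_pow]
  have h2 : ‖W^(k+1)‖ ≤ ‖W‖^k * ‖W‖ := by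
    rw [← pow_succ]; exact norm_pow_le' W (Nat.succ_pos k)
  have h3 : ‖(-t : ℂ)‖ = |t| := by
    rw [norm_neg, Complex.norm_real, Real.norm_eq_abs]
  calc ‖(-t : ℂ)‖^k * ‖W^(k+1)‖ ≤ ‖(-t:ℂ)‖^k * (‖W‖^k * ‖W‖) :=
        mul_le_mul_of_nonneg_left h2 (by positivity)
    _ = ‖W‖ * (|t| * ‖W‖)^k := by rw [h3, mul_pow]; ring

lemma d_summable {W : 𝔸} {t : ℝ} (ht : |t| * ‖W‖ < 1) :
    Summable fun k : ℕ => ((-t : ℂ))^k • W^(k+1) :=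
  Summable.of_norm_bounded
    ((summable_geometric_of_lt_one (by positivity) ht).mul_left ‖W‖) (d_norm_le W t)

lemma key_identity {W : 𝔸} {t : ℝ} (ht : |t| * ‖W‖ < 1) :
    (∑' k : ℕ, ((-t : ℂ))^k • W^(k+1)) * (1 + t • W) = W := by
  have hs := d_summable (W := W) ht
  have hmul : ∀ k : ℕ, (((-t : ℂ))^k • W^(k+1)) * (t • W)
      = -(((-t : ℂ))^(k+1) • W^(k+2)) := by
    intro k
    rw [real_smul_eq, smul_mul_smul_comm, ← pow_succ, ← neg_smul]
    congr 1
    rw [pow_succ (-t : ℂ)]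
    ring
  rw [mul_add, mul_one, ← Summable.tsum_mul_right _ hs]
  conv_lhs => rw [Summable.tsum_eq_zero_add hs]
  simp_rw [hmul]
  rw [tsum_neg, Summable.tsum_eq_zero_add (by exact hs.comp_injective (add_left_injective 1))]
  simp only [pow_zero, one_smul, pow_one, zero_add]
  abel

noncomputable def logOneAddC (W : 𝔸) : 𝔸 := ∑' k : ℕ, ((-1 : ℂ)^k / (k+1)) • W^(k+1)

lemma g_deriv (W : 𝔸) (k : ℕ) (t : ℝ) :
    HasDerivAt (fun t : ℝ => t^(k+1) • (((-1 : ℂ)^k / (k+1)) • W^(k+1)))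
      (((-t : ℂ))^k • W^(k+1)) t := by
  have h := (hasDerivAt_pow (k+1) t).smul_const (((-1 : ℂ)^k / (k+1)) • W^(k+1))
  refine h.congr_deriv ?_
  symm
  rw [real_smul_eq, smul_smul]
  congr 1
  push_cast
  have hk : ((k : ℂ) + 1) ≠ 0 := by exact_mod_cast (Nat.cast_ne_zero (R := ℂ)).mpr (Nat.succ_ne_zero k)
  field_simp
  rw [neg_pow]
  ring

lemma exp_logOneAdd_comm {W : 𝔸} (hW : ‖W‖ < 1) : exp (logOneAddC W) = 1 + W := by
  by_cases hW0 : W = 0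
  · simp [hW0, logOneAddC, zero_pow, exp_zero]
  have hWpos : 0 < ‖W‖ := norm_pos_iff.mpr hW0
  set ρ : ℝ := (1 + ‖W‖⁻¹)/2 with hρdef
  have hρ1 : 1 < ρ := by
    have : 1 < ‖W‖⁻¹ := (one_lt_inv₀ hWpos).mpr hW
    rw [hρdef]; linarith
  have hρW : ρ * ‖W‖ < 1 := by
    rw [hρdef]
    have : (1 + ‖W‖⁻¹)/2 * ‖W‖ = (‖W‖ + 1)/2 := by field_simp
    rw [this]; linarith
  have hρpos : 0 < ρ := lt_trans one_pos hρ1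
  set s : Set ℝ := Set.Ioo (-ρ) ρ with hsdef
  have habs : ∀ t ∈ s, |t| * ‖W‖ < 1 := fun t ht => by
    have h1 : |t| < ρ := abs_lt.mpr ⟨ht.1, ht.2⟩
    calc |t| * ‖W‖ ≤ ρ * ‖W‖ := by nlinarith [abs_nonneg t]
      _ < 1 := hρW
  set g : ℕ → ℝ → 𝔸 := fun k t => t^(k+1) • (((-1 : ℂ)^k / (k+1)) • W^(k+1)) with hgdef
  set d : ℕ → ℝ → 𝔸 := fun k t => ((-t : ℂ))^k • W^(k+1) with hddef
  have hu : Summable (fun k : ℕ => ‖W‖ * (ρ * ‖W‖)^k) :=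
    (summable_geometric_of_lt_one (by positivity) hρW).mul_left ‖W‖
  have hbound : ∀ (k : ℕ) (t : ℝ), t ∈ s → ‖d k t‖ ≤ ‖W‖ * (ρ * ‖W‖)^k := by
    intro k t ht
    refine (d_norm_le W t k).trans ?_
    have h1 : |t| ≤ ρ := le_of_lt (abs_lt.mpr ⟨ht.1, ht.2⟩)
    have : (|t| * ‖W‖)^k ≤ (ρ * ‖W‖)^k := by
      apply pow_le_pow_left₀ (by positivity)
      nlinarith [abs_nonneg t]
    nlinarith [norm_nonneg W]
  have hg0 : ∀ k : ℕ, g k 0 = 0 := fun k => by simp [hgdef, zero_pow (Nat.succ_ne_zero k)]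
  have hLderiv : ∀ t ∈ s, HasDerivAt (fun t => ∑' k, g k t) (∑' k, d k t) t := by
    intro t ht
    exact hasDerivAt_tsum_of_isPreconnected hu isOpen_Ioo (isPreconnected_Ioo)
      (fun k x _ => g_deriv W k x) (fun k x hx => hbound k x hx)
      (Set.mem_Ioo.mpr ⟨by linarith, hρpos⟩) (by simp only [hg0]; exact summable_zero) ht
  set Lf : ℝ → 𝔸 := fun t => ∑' k, g k t with hLfdef
  set h : ℝ → 𝔸 := fun t => exp (-(Lf t)) * (1 + t • W) with hhdef
  have hh : ∀ t ∈ s, HasDerivAt h 0 t := by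
    intro t ht
    have hexp : HasFDerivAt exp (exp (-(Lf t)) • (1 : 𝔸 →L[ℂ] 𝔸)) (-(Lf t)) :=
      hasFDerivAt_exp_of_mem_ball (by
        rw [expSeries_radius_eq_top]; exact edist_lt_top _ _)
    have hneg : HasDerivAt (fun t => -(Lf t)) (-(∑' k, d k t)) t := (hLderiv t ht).neg
    have hcomp : HasDerivAt (fun t => exp (-(Lf t)))
        (exp (-(Lf t)) * (-(∑' k, d k t))) t := by
      have := (hexp.restrictScalars ℝ).comp_hasDerivAt t hneg
      simpa [Function.comp_def] using this
    have hlin : HasDerivAt (fun t : ℝ => 1 + t • W) W t := by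
      simpa using ((hasDerivAt_id t).smul_const W).const_add 1
    have := hcomp.mul hlin
    convert this using 1
    · rfl
    have hkey : (∑' k, d k t) * (1 + t • W) = W := key_identity (habs t ht)
    rw [mul_assoc, neg_mul, hkey]
    ring
  have hIcc : Set.Icc (0:ℝ) 1 ⊆ s := by
    intro x hx
    exact Set.mem_Ioo.mpr ⟨by linarith [hx.1], by linarith [hx.2]⟩
  have hconst : h 1 = h 0 := by
    have := constant_of_has_deriv_right_zero
      (f := h) (a := 0) (b := 1)
      (fun x hx => ((hh x (hIcc hx)).continuousAt).continuousWithinAt)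
      (fun x hx => ((hh x (hIcc (Set.mem_Icc.mpr ⟨hx.1, le_of_lt hx.2⟩))).hasDerivWithinAt))
    exact this 1 (Set.mem_Icc.mpr ⟨zero_le_one, le_refl _⟩)
  have hh0 : h 0 = 1 := by
    have hLf0 : Lf 0 = 0 := by
      have : Lf 0 = ∑' k, g k 0 := rfl
      rw [this, tsum_congr hg0, tsum_zero]
    show exp (-Lf 0) * (1 + (0:ℝ) • W) = 1
    rw [hLf0, neg_zero, exp_zero, zero_smul, add_zero, one_mul]
  have hLf1 : Lf 1 = logOneAddC W := by
    rw [hLfdef, logOneAddC]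
    exact tsum_congr fun k => by simp only [hgdef, one_pow, one_smul]
  have hfin : exp (-(logOneAddC W)) * (1 + W) = 1 := by
    have h1 : exp (-Lf 1) * (1 + (1:ℝ) • W) = 1 := hconst.trans hh0
    rwa [hLf1, one_smul] at h1
  calc exp (logOneAddC W)
      = exp (logOneAddC W) * (exp (-(logOneAddC W)) * (1 + W)) := by rw [hfin, mul_one]
    _ = (exp (logOneAddC W + -(logOneAddC W))) * (1 + W) := by
        rw [exp_add_of_mem_ball (𝕂 := ℂ) (x := logOneAddC W) (y := -(logOneAddC W)) (by rw [expSeries_radius_eq_top]; exact edist_lt_top _ _) (by rw [expSeries_radius_eq_top]; exact edist_lt_top _ _)]; ring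
    _ = 1 + W := by simp [exp_zero]

end Comm

section Transfer
variable {𝔸 : Type*} [NormedRing 𝔸] [NormedAlgebra ℂ 𝔸] [CompleteSpace 𝔸]

-- bridge: comm lemma in tsum form
lemma exp_logOneAddC_comm {𝔹 : Type*} [NormedCommRing 𝔹] [NormedAlgebra ℂ 𝔹] [CompleteSpace 𝔹]
    {W : 𝔹} (hW : ‖W‖ < 1) : exp (∑' k : ℕ, ((-1 : ℂ)^k / (k+1)) • W^(k+1)) = 1 + W :=
  exp_logOneAdd_comm hW

theorem exp_logOneAdd {W : 𝔸} (hW : ‖W‖ < 1) : exp (logOneAdd W) = 1 + W := by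
  set S := Algebra.elemental ℂ W with hSdef
  letI : NormedCommRing S := { (inferInstance : NormedRing S) with mul_comm := mul_comm }
  set W' : S := ⟨W, Algebra.elemental.self_mem ℂ W⟩ with hW'def
  have hW' : ‖W'‖ < 1 := hW
  have hmain : exp (∑' k : ℕ, ((-1 : ℂ)^k / (k+1)) • W'^(k+1)) = 1 + W' :=
    exp_logOneAddC_comm hW'
  have hsumS : Summable (fun k : ℕ => ((-1:ℂ)^k/(k+1)) • W'^(k+1)) := logSummable hW'
  have hcoe : ((∑' k : ℕ, ((-1 : ℂ)^k / (k+1)) • W'^(k+1) : S) : 𝔸) = logOneAdd W := by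
    have h2 := hsumS.hasSum.map S.val continuous_subtype_val
    have h3 : (⇑S.val ∘ fun k : ℕ => ((-1:ℂ)^k/(k+1)) • W'^(k+1))
        = fun k : ℕ => ((-1:ℂ)^k/(k+1)) • W^(k+1) := by
      funext k
      simp only [Function.comp_apply, map_smul, map_pow]
      rfl
    rw [h3] at h2
    exact h2.tsum_eq.symm
  have hexp := map_exp_of_mem_ball (𝕂 := ℂ) S.val continuous_subtype_val
      (∑' k : ℕ, ((-1 : ℂ)^k / (k+1)) • W'^(k+1)) (by rw [expSeries_radius_eq_top]; exact edist_lt_top _ _)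
  calc exp (logOneAdd W) = exp ((∑' k : ℕ, ((-1:ℂ)^k/(k+1)) • W'^(k+1) : S) : 𝔸) := by
        rw [hcoe]
    _ = ((exp (∑' k : ℕ, ((-1:ℂ)^k/(k+1)) • W'^(k+1)) : S) : 𝔸) := hexp.symm
    _ = ((1 + W' : S) : 𝔸) := by rw [hmain]
    _ = 1 + W := by push_cast; rfl

end Transfer

section Estimates
variable {𝔸 : Type*} [NormedRing 𝔸] [NormedAlgebra ℂ 𝔸] [CompleteSpace 𝔸]

lemma tsum_shift2 {f : ℕ → 𝔸} (hf : Summable f) :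
    ∑' k, f k = f 0 + f 1 + ∑' k, f (k+2) := by
  have e3 : ∑' k, f (k+1+1) = ∑' k, f (k+2) := tsum_congr fun n => congrArg f (by omega)
  rw [Summable.tsum_eq_zero_add hf, Summable.tsum_eq_zero_add ((summable_nat_add_iff 1).mpr hf), e3,
    zero_add, ← add_assoc]

lemma tsum_shift3 {f : ℕ → 𝔸} (hf : Summable f) :
    ∑' k, f k = f 0 + f 1 + f 2 + ∑' k, f (k+3) := by
  have e3 : ∑' k, f (k+2+1) = ∑' k, f (k+3) := tsum_congr fun n => congrArg f (by omega)
  rw [tsum_shift2 hf, Summable.tsum_eq_zero_add ((summable_nat_add_iff 2).mpr hf), e3,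
    zero_add, ← add_assoc]

lemma exp_remainder {X : 𝔸} (hX : ‖X‖ ≤ 1/4) :
    ‖exp X - (1 + X + (2⁻¹ : ℂ) • X^2)‖ ≤ (2/9) * ‖X‖^3 := by
  have hs : Summable fun n : ℕ => ((n ! : ℂ))⁻¹ • X ^ n := expSeries_summable' X
  have hexp : exp X = ∑' n : ℕ, ((n ! : ℂ))⁻¹ • X ^ n := by
    rw [exp_eq_tsum (𝕂 := ℂ)]
  have hsplit := tsum_shift3 hs
  have h0 : ((0! : ℂ))⁻¹ • X ^ 0 = 1 := by norm_num
  have h1 : ((1! : ℂ))⁻¹ • X ^ 1 = X := by norm_num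
  have h2 : ((2! : ℂ))⁻¹ • X ^ 2 = (2⁻¹ : ℂ) • X^2 := by norm_num [Nat.factorial]
  have hx0 : (0:ℝ) ≤ ‖X‖ := norm_nonneg X
  have hrem : ‖∑' k : ℕ, (((k+3)! : ℂ))⁻¹ • X ^ (k+3)‖ ≤ (2/9) * ‖X‖^3 := by
    have hgeo : HasSum (fun k : ℕ => ‖X‖^3/6 * ‖X‖^k) (‖X‖^3/6 * (1 - ‖X‖)⁻¹) := by
      exact (hasSum_geometric_of_lt_one hx0 (by linarith)).mul_left _
    have hb : ∀ k : ℕ, ‖(((k+3)! : ℂ))⁻¹ • X ^ (k+3)‖ ≤ ‖X‖^3/6 * ‖X‖^k := by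
      intro k
      rw [norm_smul]
      have hfact : (6 : ℝ) ≤ ((k+3)! : ℝ) := by
        exact_mod_cast Nat.factorial_le (by omega : 3 ≤ k+3)
      have hnc : ‖(((k+3)! : ℂ))⁻¹‖ ≤ 1/6 := by
        rw [norm_inv, Complex.norm_natCast]
        rw [inv_le_comm₀ (by linarith) (by norm_num)]
        linarith
      have hp : ‖X ^ (k+3)‖ ≤ ‖X‖^(k+3) := norm_pow_le' X (by omega)
      calc ‖(((k+3)! : ℂ))⁻¹‖ * ‖X^(k+3)‖ ≤ (1/6) * ‖X‖^(k+3) := by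
            apply mul_le_mul hnc hp (norm_nonneg _) (by norm_num)
        _ = ‖X‖^3/6 * ‖X‖^k := by rw [pow_add]; ring
    refine (tsum_of_norm_bounded hgeo hb).trans ?_
    have hinv : (1 - ‖X‖)⁻¹ ≤ 4/3 := by
      rw [inv_le_comm₀ (by linarith) (by norm_num)]
      linarith
    have h3 : (0:ℝ) ≤ ‖X‖^3 := by positivity
    calc ‖X‖^3/6 * (1 - ‖X‖)⁻¹ ≤ ‖X‖^3/6 * (4/3) := by nlinarith
      _ = (2/9) * ‖X‖^3 := by ring
  calc ‖exp X - (1 + X + (2⁻¹ : ℂ) • X^2)‖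
      = ‖∑' k : ℕ, (((k+3)! : ℂ))⁻¹ • X ^ (k+3)‖ := by
        rw [hexp, hsplit, h0, h1, h2]; congr 1; abel
    _ ≤ (2/9) * ‖X‖^3 := hrem

lemma log_remainder {W : 𝔸} (hW : ‖W‖ ≤ 5/16) :
    ‖(∑' k : ℕ, ((-1 : ℂ)^k / (k+1)) • W^(k+1)) - (W - (2⁻¹ : ℂ) • W^2)‖
      ≤ (1/2) * ‖W‖^3 := by
  have hW1 : ‖W‖ < 1 := by linarith
  have hs : Summable fun k : ℕ => ((-1 : ℂ)^k / (k+1)) • W^(k+1) := by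
    apply Summable.of_norm_bounded
      ((summable_geometric_of_lt_one (norm_nonneg W) hW1).mul_left ‖W‖)
    intro k
    rw [norm_smul]
    have h1 : ‖((-1 : ℂ)^k / (k+1))‖ ≤ 1 := by
      rw [norm_div, norm_pow, norm_neg, norm_one, one_pow]
      have : ((k : ℂ)+1) = ((k+1 : ℕ) : ℂ) := by push_cast; ring
      rw [this, Complex.norm_natCast]
      rw [div_le_one (by positivity)]
      push_cast; linarith [Nat.cast_nonneg (α := ℝ) k]
    have hp : ‖W^(k+1)‖ ≤ ‖W‖^(k+1) := norm_pow_le' W (Nat.succ_pos k)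
    calc ‖((-1:ℂ)^k / (k+1))‖ * ‖W^(k+1)‖ ≤ 1 * ‖W‖^(k+1) :=
          mul_le_mul h1 hp (norm_nonneg _) (by norm_num)
      _ = ‖W‖ * ‖W‖^k := by rw [one_mul, pow_succ]; ring
  have hsplit := tsum_shift2 hs
  have h0 : ((-1 : ℂ)^0 / (0+1)) • W^(0+1) = W := by norm_num
  have h1 : ((-1 : ℂ)^1 / (1+1)) • W^(1+1) = -((2⁻¹ : ℂ) • W^2) := by
    rw [pow_one, neg_div, neg_smul]
    norm_num
  have hrem : ‖∑' k : ℕ, ((-1 : ℂ)^(k+2) / (k+2+1)) • W^(k+2+1)‖ ≤ (1/2) * ‖W‖^3 := by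
    have hgeo : HasSum (fun k : ℕ => ‖W‖^3/3 * ‖W‖^k) (‖W‖^3/3 * (1 - ‖W‖)⁻¹) :=
      (hasSum_geometric_of_lt_one (norm_nonneg W) hW1).mul_left _
    have hb : ∀ k : ℕ, ‖((-1 : ℂ)^(k+2) / (k+2+1)) • W^(k+2+1)‖ ≤ ‖W‖^3/3 * ‖W‖^k := by
      intro k
      rw [norm_smul]
      have hnc : ‖((-1 : ℂ)^(k+2) / (k+2+1))‖ ≤ 1/3 := by
        rw [norm_div, norm_pow, norm_neg, norm_one, one_pow]
        have : ((k : ℂ)+2+1) = ((k+3 : ℕ) : ℂ) := by push_cast; ring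
        rw [this, Complex.norm_natCast]
        rw [div_le_div_iff₀ (by positivity) (by norm_num)]
        push_cast; linarith [Nat.cast_nonneg (α := ℝ) k]
      have hp : ‖W^(k+3)‖ ≤ ‖W‖^(k+3) := norm_pow_le' W (by omega)
      calc ‖((-1:ℂ)^(k+2) / (k+2+1))‖ * ‖W^(k+2+1)‖ ≤ (1/3) * ‖W‖^(k+3) := by
            apply mul_le_mul hnc (by exact_mod_cast hp) (norm_nonneg _) (by norm_num)
        _ = ‖W‖^3/3 * ‖W‖^k := by rw [pow_add]; ring
    refine (tsum_of_norm_bounded hgeo hb).trans ?_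
    have hinv : (1 - ‖W‖)⁻¹ ≤ 16/11 := by
      rw [inv_le_comm₀ (by linarith) (by norm_num)]
      linarith
    have h3 : (0:ℝ) ≤ ‖W‖^3 := by positivity
    calc ‖W‖^3/3 * (1 - ‖W‖)⁻¹ ≤ ‖W‖^3/3 * (16/11) := by nlinarith
      _ ≤ (1/2) * ‖W‖^3 := by nlinarith
  calc ‖(∑' k : ℕ, ((-1 : ℂ)^k / (k+1)) • W^(k+1)) - (W - (2⁻¹ : ℂ) • W^2)‖
      = ‖∑' k : ℕ, ((-1 : ℂ)^(k+2) / (k+2+1)) • W^(k+2+1)‖ := by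
        rw [hsplit]
        push_cast
        rw [h0]
        rw [show ((-1 : ℂ)^1 / (1+1)) • W^(1+1) = -((2⁻¹ : ℂ) • W^2) from h1]
        congr 1
        abel
    _ ≤ (1/2) * ‖W‖^3 := hrem

lemma log_remainder_log {W : 𝔸} (hW : ‖W‖ ≤ 5/16) :
    ‖logOneAdd W - (W - (2⁻¹ : ℂ) • W^2)‖ ≤ (1/2) * ‖W‖^3 :=
  log_remainder hW

end Estimates

lemma D1_decomp {𝔸 : Type*} [Ring 𝔸] (X Y P Q EX EY : 𝔸) :
    (EX*EY - 1) - (X + Y + P + Q + X*Y)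
      = (EX - (1+X+P))*EY + (1+X+P)*(EY - (1+Y+Q)) + (X*Q + P*Y + P*Q) := by
  noncomm_ring

lemma halg_abstract {𝔸 : Type*} [Ring 𝔸] [Algebra ℂ 𝔸] (X Y W D1 : 𝔸)
    (hW : W = X + Y + (2⁻¹:ℂ)•X^2 + (2⁻¹:ℂ)•Y^2 + X*Y + D1) :
    (W - (2⁻¹:ℂ)•W^2) - (X + Y + (2⁻¹:ℂ)•(X*Y - Y*X))
      = D1 - (2⁻¹:ℂ)•((W - (X+Y))*W + (X+Y)*(W - (X+Y))) := by
  subst hW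
  simp only [pow_two, smul_sub, smul_add, mul_add, add_mul, sub_mul, mul_sub,
    smul_mul_assoc, mul_smul_comm, smul_smul, sub_eq_add_neg, neg_add, neg_neg,
    mul_one, one_mul, neg_mul, mul_neg, mul_assoc]
  module

lemma arith1 (x y s : ℝ) (hx0 : 0 ≤ x) (hy0 : 0 ≤ y) (hxy : x + y = s) (hs4 : s ≤ 1/4) :
    (2/9)*x^3*(4/3) + (4/3)*((2/9)*y^3) + (x*((1/2)*y^2) + (1/2)*x^2*y + (1/2)*x^2*((1/2)*y^2))
      ≤ s^3 := by
  subst hxy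
  nlinarith [mul_nonneg (mul_nonneg (mul_nonneg hx0 hx0) hy0) (by linarith : (0:ℝ) ≤ 1/4 - y),
    mul_nonneg (mul_nonneg hx0 hx0) hy0, mul_nonneg (mul_nonneg hx0 hy0) hy0,
    mul_nonneg hx0 hy0, pow_nonneg hx0 3, pow_nonneg hy0 3]

lemma arith2 (x y s d : ℝ) (hx0 : 0 ≤ x) (hy0 : 0 ≤ y) (hxy : x + y = s) (hs4 : s ≤ 1/4)
    (hd : d ≤ s^3) (hd0 : 0 ≤ d) :
    (1/2)*x^2 + (1/2)*y^2 + x*y + d ≤ (3/4)*s^2 := by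
  subst hxy
  nlinarith [sq_nonneg (x+y), mul_nonneg hx0 hy0, pow_nonneg (add_nonneg hx0 hy0) 2,
    pow_nonneg (add_nonneg hx0 hy0) 3]

set_option maxHeartbeats 2000000 in
/-- Baker–Campbell–Hausdorff with remainder: there is an absolute constant `C` such
that for Hermitian `A, B` and `δt > 0` with `(‖A‖+‖B‖)δt ≤ 1/4`,
`e^{-iAδt} e^{-iBδt} = e^{-iH̃δt}` with `H̃ = A + B - (iδt/2)[A,B] + R` and
`‖R‖ ≤ C δt² (‖A‖+‖B‖)³`. -/
theorem bch_second_order :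
    ∃ C : ℝ, 0 < C ∧
      ∀ (n : ℕ) (A B : EuclideanSpace ℂ (Fin n) →L[ℂ] EuclideanSpace ℂ (Fin n)),
        IsSelfAdjoint A → IsSelfAdjoint B →
        ∀ δt : ℝ, 0 < δt → (‖A‖ + ‖B‖) * δt ≤ 1 / 4 →
          ∃ R : EuclideanSpace ℂ (Fin n) →L[ℂ] EuclideanSpace ℂ (Fin n),
            NormedSpace.exp ((-(Complex.I * (δt : ℂ))) • A) *
                NormedSpace.exp ((-(Complex.I * (δt : ℂ))) • B)
              = NormedSpace.exp ((-(Complex.I * (δt : ℂ))) •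
                  (A + B - ((Complex.I * (δt : ℂ)) / 2) • (A * B - B * A) + R))
            ∧ ‖R‖ ≤ C * δt ^ 2 * (‖A‖ + ‖B‖) ^ 3 := by
  refine ⟨3, by norm_num, ?_⟩
  intro n A B _hA _hB δt hδt hsmall
  set c : ℂ := -(Complex.I * (δt : ℂ)) with hcdef
  have hδtC : ((δt : ℂ)) ≠ 0 := Complex.ofReal_ne_zero.mpr (ne_of_gt hδt)
  have hcn : ‖c‖ = δt := by
    rw [hcdef, norm_neg, norm_mul, Complex.norm_I, one_mul, Complex.norm_real,
      Real.norm_eq_abs, abs_of_pos hδt]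
  set X := c • A with hXdef
  set Y := c • B with hYdef
  set s := (‖A‖ + ‖B‖) * δt with hsdef
  have hXn : ‖X‖ = δt * ‖A‖ := by
    rw [hXdef]; exact (norm_smul c A).trans (by rw [hcn])
  have hYn : ‖Y‖ = δt * ‖B‖ := by
    rw [hYdef]; exact (norm_smul c B).trans (by rw [hcn])
  have hxy : ‖X‖ + ‖Y‖ = s := by rw [hXn, hYn, hsdef]; ring
  have hx0 : 0 ≤ ‖X‖ := norm_nonneg _
  have hy0 : 0 ≤ ‖Y‖ := norm_nonneg _
  have hs0 : 0 ≤ s := by rw [← hxy]; positivity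
  have hxs : ‖X‖ ≤ s := by linarith
  have hys : ‖Y‖ ≤ s := by linarith
  have hs4 : s ≤ 1/4 := hsmall
  have hone : ‖(1 : EuclideanSpace ℂ (Fin n) →L[ℂ] EuclideanSpace ℂ (Fin n))‖ ≤ 1 :=
    ContinuousLinearMap.norm_id_le
  set P := (2⁻¹ : ℂ) • X^2 with hPdef
  set Q := (2⁻¹ : ℂ) • Y^2 with hQdef
  set EX := exp X with hEXdef
  set EY := exp Y with hEYdef
  set rX := EX - (1 + X + P) with hrXdef
  set rY := EY - (1 + Y + Q) with hrYdef
  have hrXn : ‖rX‖ ≤ (2/9) * ‖X‖^3 := exp_remainder (by linarith)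
  have hrYn : ‖rY‖ ≤ (2/9) * ‖Y‖^3 := exp_remainder (by linarith)
  have hhalf : ‖(2⁻¹ : ℂ)‖ = 1/2 := by norm_num
  have hX2 : ‖X^2‖ ≤ ‖X‖^2 := by
    rw [pow_two, pow_two]; exact norm_mul_le X X
  have hY2 : ‖Y^2‖ ≤ ‖Y‖^2 := by
    rw [pow_two, pow_two]; exact norm_mul_le Y Y
  have hPn : ‖P‖ ≤ (1/2) * ‖X‖^2 := by
    rw [hPdef, norm_smul (2⁻¹ : ℂ) (X^2), hhalf]; nlinarith [norm_nonneg (X^2)]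
  have hQn : ‖Q‖ ≤ (1/2) * ‖Y‖^2 := by
    rw [hQdef, norm_smul (2⁻¹ : ℂ) (Y^2), hhalf]; nlinarith [norm_nonneg (Y^2)]
  have hEYn : ‖EY‖ ≤ 4/3 := by
    have h1 : EY = 1 + Y + Q + rY := by rw [hrYdef]; abel
    have h2 := norm_add_le (1 + Y + Q) rY
    have h3 := norm_add_le ((1:_) + Y) Q
    have h4 := norm_add_le (1:_) Y
    rw [← h1] at h2
    nlinarith [norm_nonneg rY, norm_nonneg Q]
  have h1XP : ‖1 + X + P‖ ≤ 4/3 := by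
    have h3 := norm_add_le ((1:_) + X) P
    have h4 := norm_add_le (1:_) X
    nlinarith [norm_nonneg P]
  set W := EX * EY - 1 with hWdef
  set D1 := W - (X + Y + P + Q + X*Y) with hD1def
  have hD1eq : D1 = rX*EY + (1+X+P)*rY + (X*Q + P*Y + P*Q) := by
    rw [hD1def, hWdef, hrXdef, hrYdef]
    exact D1_decomp X Y P Q EX EY
  have hD1n : ‖D1‖ ≤ s^3 := by
    have e1 : ‖rX*EY‖ ≤ (2/9) * ‖X‖^3 * (4/3) :=
      (norm_mul_le _ _).trans (mul_le_mul hrXn hEYn (norm_nonneg _) (by positivity))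
    have e2 : ‖(1+X+P)*rY‖ ≤ (4/3) * ((2/9) * ‖Y‖^3) :=
      (norm_mul_le _ _).trans (mul_le_mul h1XP hrYn (norm_nonneg _) (by norm_num))
    have e3 : ‖X*Q‖ ≤ ‖X‖ * ((1/2)*‖Y‖^2) :=
      (norm_mul_le _ _).trans (mul_le_mul le_rfl hQn (norm_nonneg _) hx0)
    have e4 : ‖P*Y‖ ≤ (1/2)*‖X‖^2 * ‖Y‖ :=
      (norm_mul_le _ _).trans (mul_le_mul hPn le_rfl (norm_nonneg _) (by positivity))
    have e5 : ‖P*Q‖ ≤ (1/2)*‖X‖^2 * ((1/2)*‖Y‖^2) :=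
      (norm_mul_le _ _).trans (mul_le_mul hPn hQn (norm_nonneg _) (by positivity))
    have t1 := norm_add_le (rX*EY + (1+X+P)*rY) (X*Q + P*Y + P*Q)
    have t2 := norm_add_le (rX*EY) ((1+X+P)*rY)
    have t3 := norm_add_le (X*Q + P*Y) (P*Q)
    have t4 := norm_add_le (X*Q) (P*Y)
    have etot : ‖D1‖ ≤ (2/9)*‖X‖^3*(4/3) + (4/3)*((2/9)*‖Y‖^3) + (‖X‖*((1/2)*‖Y‖^2)
        + (1/2)*‖X‖^2*‖Y‖ + (1/2)*‖X‖^2*((1/2)*‖Y‖^2)) := by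
      rw [hD1eq]
      linarith
    exact etot.trans (arith1 ‖X‖ ‖Y‖ s hx0 hy0 hxy hs4)
  have hWXY : W - (X+Y) = P + Q + X*Y + D1 := by rw [hD1def]; abel
  have hWXYn : ‖W - (X+Y)‖ ≤ (3/4) * s^2 := by
    have t2 := norm_add_le (P + Q + X*Y) D1
    have t3 := norm_add_le (P + Q) (X*Y)
    have t4 := norm_add_le P Q
    have t5 : ‖X*Y‖ ≤ ‖X‖*‖Y‖ := norm_mul_le _ _
    rw [← hWXY] at t2
    have harith := arith2 ‖X‖ ‖Y‖ s ‖D1‖ hx0 hy0 hxy hs4 hD1n (norm_nonneg _)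
    linarith
  have hXYn : ‖X + Y‖ ≤ s := by
    have := norm_add_le X Y; linarith
  have hWn : ‖W‖ ≤ (19/16) * s := by
    have t1 : ‖W‖ ≤ ‖W - (X+Y)‖ + ‖X+Y‖ := by
      calc ‖W‖ = ‖(W - (X+Y)) + (X+Y)‖ := by congr 1; abel
        _ ≤ _ := norm_add_le _ _
    nlinarith
  have hW516 : ‖W‖ ≤ 5/16 := by nlinarith
  set Z := logOneAdd W with hZdef
  have hexpZ : exp Z = EX * EY := by
    rw [hZdef, exp_logOneAdd (by linarith : ‖W‖ < 1), hWdef]; abel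
  set T := X + Y + (2⁻¹:ℂ) • (X*Y - Y*X) with hTdef
  have halg : (W - (2⁻¹:ℂ)•W^2) - T
      = D1 - (2⁻¹:ℂ)•((W - (X+Y))*W + (X+Y)*(W - (X+Y))) := by
    have hW' : W = X + Y + (2⁻¹:ℂ)•X^2 + (2⁻¹:ℂ)•Y^2 + X*Y + D1 := by
      rw [hD1def, hPdef, hQdef]; abel
    rw [hTdef]
    exact halg_abstract X Y W D1 hW'
  have hZT : ‖Z - T‖ ≤ 3 * s^3 := by
    have l1 : ‖Z - (W - (2⁻¹:ℂ)•W^2)‖ ≤ (1/2) * ‖W‖^3 := log_remainder_log hW516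
    have l2 : ‖(W - (2⁻¹:ℂ)•W^2) - T‖
        ≤ ‖D1‖ + (1/2) * (‖W - (X+Y)‖ * ‖W‖ + ‖X+Y‖ * ‖W - (X+Y)‖) := by
      rw [halg]
      have t1 := norm_sub_le D1 ((2⁻¹:ℂ)•((W - (X+Y))*W + (X+Y)*(W - (X+Y))))
      have t2 : ‖(2⁻¹:ℂ)•((W - (X+Y))*W + (X+Y)*(W - (X+Y)))‖
          ≤ (1/2) * (‖W - (X+Y)‖ * ‖W‖ + ‖X+Y‖ * ‖W - (X+Y)‖) := by
        rw [norm_smul (2⁻¹:ℂ) ((W - (X+Y))*W + (X+Y)*(W - (X+Y))), hhalf]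
        have u1 := norm_add_le ((W - (X+Y))*W) ((X+Y)*(W - (X+Y)))
        have u2 := norm_mul_le (W - (X+Y)) W
        have u3 := norm_mul_le (X+Y) (W - (X+Y))
        nlinarith [norm_nonneg ((W - (X+Y))*W + (X+Y)*(W - (X+Y)))]
      linarith
    have t0 : ‖Z - T‖ ≤ ‖Z - (W - (2⁻¹:ℂ)•W^2)‖ + ‖(W - (2⁻¹:ℂ)•W^2) - T‖ := by
      calc ‖Z - T‖ = ‖(Z - (W - (2⁻¹:ℂ)•W^2)) + ((W - (2⁻¹:ℂ)•W^2) - T)‖ := by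
            congr 1; abel
        _ ≤ _ := norm_add_le _ _
    have hW3 : ‖W‖^3 ≤ 6859/4096 * s^3 := by
      have h := pow_le_pow_left₀ (norm_nonneg W) hWn 3
      have h2 : ((19:ℝ)/16 * s)^3 = 6859/4096 * s^3 := by ring
      rw [h2] at h
      exact h
    have hWXYW : ‖W - (X+Y)‖ * ‖W‖ ≤ (3/4)*s^2 * ((19/16)*s) :=
      mul_le_mul hWXYn hWn (norm_nonneg _) (by positivity)
    have hXYWXY : ‖X+Y‖ * ‖W - (X+Y)‖ ≤ s * ((3/4)*s^2) :=
      mul_le_mul hXYn hWXYn (norm_nonneg _) hs0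
    have hcube1 : (3:ℝ)/4*s^2 * ((19/16)*s) = 57/64 * s^3 := by ring
    have hcube2 : s * ((3:ℝ)/4*s^2) = 3/4 * s^3 := by ring
    rw [hcube1] at hWXYW
    rw [hcube2] at hXYWXY
    linarith [pow_nonneg hs0 3]
  set Pre := A + B - ((Complex.I * (δt:ℂ)) / 2) • (A * B - B * A) with hPredef
  refine ⟨(Complex.I / (δt:ℂ)) • Z - Pre, ?_, ?_⟩
  · have h1 : Pre + ((Complex.I / (δt:ℂ)) • Z - Pre) = (Complex.I / (δt:ℂ)) • Z := by abel
    rw [h1]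
    have h2 : c • ((Complex.I / (δt:ℂ)) • Z) = Z := by
      rw [smul_smul, hcdef]
      have h3 : -(Complex.I * (δt:ℂ)) * (Complex.I / (δt:ℂ)) = 1 := by
        field_simp [Complex.I_mul_I]
        linear_combination (-1:ℂ) * Complex.I_mul_I
      rw [h3, one_smul]
    rw [h2, hexpZ]
  · have e1 : (Complex.I / (δt:ℂ)) • X = A := by
      rw [hXdef, smul_smul, hcdef]
      have h3 : (Complex.I / (δt:ℂ)) * -(Complex.I * (δt:ℂ)) = 1 := by
        field_simp [Complex.I_mul_I]
        linear_combination (-1:ℂ) * Complex.I_mul_I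
      rw [h3, one_smul]
    have e2 : (Complex.I / (δt:ℂ)) • Y = B := by
      rw [hYdef, smul_smul, hcdef]
      have h3 : (Complex.I / (δt:ℂ)) * -(Complex.I * (δt:ℂ)) = 1 := by
        field_simp [Complex.I_mul_I]
        linear_combination (-1:ℂ) * Complex.I_mul_I
      rw [h3, one_smul]
    have e3 : (Complex.I / (δt:ℂ)) • ((2⁻¹:ℂ) • (X*Y - Y*X))
        = -(((Complex.I * (δt:ℂ)) / 2) • (A * B - B * A)) := by
      have eXY : X*Y - Y*X = (c*c) • (A*B - B*A) := by
        rw [hXdef, hYdef, smul_mul_smul_comm, smul_mul_smul_comm, smul_sub]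
      rw [eXY, smul_smul, smul_smul]
      have hsc : Complex.I/(δt:ℂ) * 2⁻¹ * (c*c) = -((Complex.I*(δt:ℂ))/2) := by
        rw [hcdef]
        field_simp
        linear_combination Complex.I_sq
      rw [hsc]
      exact neg_smul ((Complex.I*(δt:ℂ))/2) (A*B - B*A)
    have hPreT : Pre = (Complex.I / (δt:ℂ)) • T := by
      rw [hPredef, hTdef, smul_add, smul_add, e1, e2, e3]
      abel
    have hRfactor : (Complex.I / (δt:ℂ)) • Z - Pre = (Complex.I / (δt:ℂ)) • (Z - T) := by
      rw [hPreT, smul_sub]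
    rw [hRfactor, norm_smul (Complex.I / (δt:ℂ)) (Z - T)]
    have hIn : ‖Complex.I / (δt:ℂ)‖ = 1/δt := by
      rw [norm_div, Complex.norm_I, Complex.norm_real, Real.norm_eq_abs, abs_of_pos hδt]
    rw [hIn]
    have hfin : 1/δt * ‖Z - T‖ ≤ 1/δt * (3 * s^3) :=
      mul_le_mul_of_nonneg_left hZT (by positivity)
    refine hfin.trans ?_
    rw [hsdef]
    rw [show (1:ℝ)/δt * (3 * ((‖A‖ + ‖B‖) * δt)^3) = 3 * δt^2 * (‖A‖+‖B‖)^3 * (δt/δt) by ring]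
    rw [div_self (ne_of_gt hδt), mul_one]
end
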